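/- Let G be a finite simple graph whose vertex set is partitioned into three independent sets A, B, C. Suppose that (i) there exists a function h : C → {1, 2, …, 12} such that every vertex u ∈ A ∪ B having at least one neighbor in C satisfies Σ_{x ∈ N(u) ∩ C} h(x) ≢ 0 (mod 12), and (ii) the bipartite subgraph of G induced on A ∪ B admits an orientation of its edges in which every vertex has indegree at most 2. Then η(G) ≤ 36. -/

import Mathlib

/-- The sum of the values of `f` over the neighborhood of `u` in `G`. -/
noncomputable def nsum {V : Type*} [Fintype V] {M : Type*} [AddCommMonoid M]
    (G : SimpleGraph V) (f : V → M) (u : V) : M :=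
  letI := Classical.decRel G.Adj
  ∑ x ∈ G.neighborFinset u, f x

/-- `G` has an additive coloring using the labels `{1, 2, …, k}`. -/
def HasAddColoring {V : Type*} [Fintype V] (G : SimpleGraph V) (k : ℕ) : Prop :=
  ∃ f : V → ℕ, (∀ v, f v ∈ Finset.Icc 1 k) ∧
    ∀ ⦃u v : V⦄, G.Adj u v → nsum G f u ≠ nsum G f v

/-- `η(G)`: the least `k` such that `G` has an additive coloring with labels `{1, …, k}`. -/
noncomputable def eta {V : Type*} [Fintype V] (G : SimpleGraph V) : ℕ :=
  sInf {k | HasAddColoring G k}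


section AuxCN
set_option linter.unusedSectionVars false


open MvPolynomial Finset

variable {V : Type*} [Fintype V] [DecidableEq V]

/-- weight function for coefficient formula on grid {1,2,3} -/
noncomputable def wt (s : ℚ) : ℚ := if s = 2 then -1 else 1/2

noncomputable def const2 (V : Type*) [Fintype V] : V →₀ ℕ :=
  Finsupp.equivFunOnFinite.symm (fun _ => 2)

@[simp] lemma const2_apply (v : V) : const2 V v = 2 := rfl

lemma cval (k : ℕ) : ∑ s ∈ ({1,2,3} : Finset ℚ), s ^ k * wt s
    = (1:ℚ)^k * (1/2) + 2^k * (-1) + 3^k * (1/2) := by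
  rw [show ({1,2,3} : Finset ℚ) = insert 1 (insert 2 {3}) from rfl]
  rw [Finset.sum_insert (by norm_num), Finset.sum_insert (by norm_num),
    Finset.sum_singleton]
  simp [wt]; ring

lemma cval0 : ∑ s ∈ ({1,2,3} : Finset ℚ), s ^ 0 * wt s = 0 := by rw [cval]; norm_num
lemma cval1 : ∑ s ∈ ({1,2,3} : Finset ℚ), s ^ 1 * wt s = 0 := by rw [cval]; norm_num
lemma cval2 : ∑ s ∈ ({1,2,3} : Finset ℚ), s ^ 2 * wt s = 1 := by rw [cval]; norm_num

lemma monomial_formula (ν : V →₀ ℕ) (hν : ∑ v, ν v ≤ 2 * Fintype.card V) :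
    ∑ x ∈ Fintype.piFinset (fun _ : V => ({1,2,3} : Finset ℚ)),
      (∏ v, (x v) ^ (ν v) * wt (x v)) = if ν = const2 V then 1 else 0 := by
  have hswap := Finset.prod_univ_sum (fun _ : V => ({1,2,3} : Finset ℚ))
    (fun v s => s ^ ν v * wt s)
  rw [← hswap]
  by_cases hc : ν = const2 V
  · rw [if_pos hc, hc]
    simp only [const2_apply]
    rw [Finset.prod_congr rfl fun v _ => cval2]
    simp
  · rw [if_neg hc]
    -- there is a vertex with ν v < 2
    have hex : ∃ v : V, ν v < 2 := by
      by_contra hall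
      push_neg at hall
      have h2 : ∀ v : V, ν v = 2 := by
        intro v
        by_contra hne
        have hgt : 2 < ν v := lt_of_le_of_ne (hall v) (Ne.symm hne)
        have : 2 * Fintype.card V < ∑ v, ν v := by
          calc 2 * Fintype.card V = ∑ _v : V, 2 := by
                simp [Finset.sum_const, mul_comm]
            _ < ∑ v, ν v := by
                apply Finset.sum_lt_sum (fun i _ => hall i) ⟨v, Finset.mem_univ v, hgt⟩
        omega
      exact hc (Finsupp.ext h2)
    obtain ⟨v, hv⟩ := hex
    apply Finset.prod_eq_zero (Finset.mem_univ v)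
    interval_cases hk : ν v
    · exact cval0
    · exact cval1

/-- Coefficient formula / CN-lite for the grid {1,2,3}^V. -/
lemma cn_lite (P : MvPolynomial V ℚ)
    (hdeg : P.totalDegree ≤ 2 * Fintype.card V)
    (hco : MvPolynomial.coeff (const2 V) P ≠ 0) :
    ∃ x : V → ℚ, (∀ v, x v ∈ ({1,2,3} : Finset ℚ)) ∧ MvPolynomial.eval x P ≠ 0 := by
  have key : ∑ x ∈ Fintype.piFinset (fun _ : V => ({1,2,3} : Finset ℚ)),
      (MvPolynomial.eval x P) * ∏ v, wt (x v) = MvPolynomial.coeff (const2 V) P := by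
    have : ∀ x : V → ℚ, (MvPolynomial.eval x P) * ∏ v, wt (x v)
        = ∑ ν ∈ P.support, MvPolynomial.coeff ν P * ∏ v, (x v) ^ (ν v) * wt (x v) := by
      intro x
      rw [MvPolynomial.eval_eq', Finset.sum_mul]
      apply Finset.sum_congr rfl
      intro ν _
      rw [mul_assoc, ← Finset.prod_mul_distrib]
    rw [Finset.sum_congr rfl fun x _ => this x, Finset.sum_comm]
    have step : ∀ ν ∈ P.support, (∑ x ∈ Fintype.piFinset (fun _ : V => ({1,2,3} : Finset ℚ)),
        MvPolynomial.coeff ν P * ∏ v, (x v) ^ (ν v) * wt (x v))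
        = if ν = const2 V then MvPolynomial.coeff ν P else 0 := by
      intro ν hν
      rw [← Finset.mul_sum, monomial_formula]
      · rw [mul_ite, mul_one, mul_zero]
      · have := MvPolynomial.le_totalDegree hν
        have hs : (ν.sum fun _ e => e) = ∑ v, ν v := by
          rw [Finsupp.sum_fintype]; intro; rfl
        omega
    rw [Finset.sum_congr rfl step,
      Finset.sum_ite_eq' P.support (const2 V) (fun ν => MvPolynomial.coeff ν P)]
    simp [MvPolynomial.mem_support_iff.mpr hco]
  by_contra hno
  push_neg at hno
  apply hco
  rw [← key]
  apply Finset.sum_eq_zero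
  intro x hx
  rcases eq_or_ne (MvPolynomial.eval x P) 0 with h | h
  · rw [h, zero_mul]
  · exact absurd h (by
      have := hno x (fun v => Fintype.mem_piFinset.mp hx v)
      exact fun hh => hh this |>.elim)

variable {V : Type*} [Fintype V] [DecidableEq V] {ι : Type*} [DecidableEq ι]

noncomputable def lin (m : V → ℕ) : MvPolynomial V ℚ :=
  ∑ v, MvPolynomial.C (m v : ℚ) * MvPolynomial.X v

lemma lin_coeff (m : V → ℕ) (ν : V →₀ ℕ) :
    MvPolynomial.coeff ν (lin m)
      = ∑ v, (if Finsupp.single v 1 = ν then (m v : ℚ) else 0) := by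
  rw [lin, MvPolynomial.coeff_sum]
  apply Finset.sum_congr rfl
  intro v _
  rw [MvPolynomial.coeff_C_mul, MvPolynomial.X, MvPolynomial.coeff_monomial]
  split_ifs <;> simp

lemma lin_coeff_single (m : V → ℕ) (u : V) :
    MvPolynomial.coeff (Finsupp.single u 1) (lin m) = (m u : ℚ) := by
  rw [lin_coeff]
  have hiff : ∀ v : V, (Finsupp.single v 1 = Finsupp.single u (1:ℕ)) ↔ v = u :=
    fun v => Finsupp.single_left_inj one_ne_zero
  simp only [hiff]
  rw [Finset.sum_ite_eq' Finset.univ u (fun v => (m v : ℚ))]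
  simp

lemma lin_coeff_nonneg (m : V → ℕ) (ν : V →₀ ℕ) : 0 ≤ MvPolynomial.coeff ν (lin m) := by
  rw [lin_coeff]
  apply Finset.sum_nonneg
  intro v _
  split_ifs <;> positivity

lemma lin_deg_one (m : V → ℕ) (ν : V →₀ ℕ) (h : MvPolynomial.coeff ν (lin m) ≠ 0) :
    ∑ v, ν v = 1 := by
  rw [lin_coeff] at h
  obtain ⟨v, _, hv⟩ := Finset.exists_ne_zero_of_sum_ne_zero h
  have hν : Finsupp.single v 1 = ν := by
    by_contra hne
    rw [if_neg hne] at hv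
    exact hv rfl
  subst hν
  rw [Finset.sum_congr rfl fun w _ => Finsupp.single_apply]
  rw [Finset.sum_ite_eq Finset.univ v (fun _ => 1)]
  simp

lemma lin_totalDegree (m : V → ℕ) : (lin m).totalDegree ≤ 1 := by
  rw [MvPolynomial.totalDegree]
  apply Finset.sup_le
  intro ν hν
  rw [MvPolynomial.mem_support_iff] at hν
  have := lin_deg_one m ν hν
  have hs : (ν.sum fun _ e => e) = ∑ v, ν v := by
    rw [Finsupp.sum_fintype]; intro; rfl
  omega

lemma prod_coeff_nonneg (D : Finset ι) (L : ι → MvPolynomial V ℚ)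
    (h : ∀ p ∈ D, ∀ ν, 0 ≤ MvPolynomial.coeff ν (L p)) (ν : V →₀ ℕ) :
    0 ≤ MvPolynomial.coeff ν (∏ p ∈ D, L p) := by
  induction D using Finset.cons_induction generalizing ν with
  | empty => simp [MvPolynomial.coeff_one]; split_ifs <;> norm_num
  | cons a D ha ih =>
    rw [Finset.prod_cons, MvPolynomial.coeff_mul]
    apply Finset.sum_nonneg
    intro x _
    exact mul_nonneg (h a (Finset.mem_cons_self a D) x.1)
      (ih (fun p hp => h p (Finset.mem_cons.mpr (Or.inr hp))) x.2)

lemma prod_coeff_lower (D : Finset ι) (L : ι → MvPolynomial V ℚ) (g : ι → V)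
    (hnn : ∀ p ∈ D, ∀ ν, 0 ≤ MvPolynomial.coeff ν (L p))
    (hg : ∀ p ∈ D, 1 ≤ MvPolynomial.coeff (Finsupp.single (g p) 1) (L p)) :
    1 ≤ MvPolynomial.coeff (∑ p ∈ D, Finsupp.single (g p) 1) (∏ p ∈ D, L p) := by
  induction D using Finset.cons_induction with
  | empty => simp [MvPolynomial.coeff_one]
  | cons a D ha ih =>
    rw [Finset.prod_cons, Finset.sum_cons, MvPolynomial.coeff_mul]
    have hmem : ((Finsupp.single (g a) 1 : V →₀ ℕ),
        ∑ p ∈ D, Finsupp.single (g p) 1) ∈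
        Finset.HasAntidiagonal.antidiagonal (Finsupp.single (g a) 1 + ∑ p ∈ D, Finsupp.single (g p) 1) :=
      Finset.HasAntidiagonal.mem_antidiagonal.mpr rfl
    calc (1:ℚ) = 1 * 1 := by ring
      _ ≤ MvPolynomial.coeff (Finsupp.single (g a) 1) (L a) *
          MvPolynomial.coeff (∑ p ∈ D, Finsupp.single (g p) 1) (∏ p ∈ D, L p) := by
          apply mul_le_mul (hg a (Finset.mem_cons_self a D))
            (ih (fun p hp ν => hnn p (Finset.mem_cons.mpr (Or.inr hp)) ν)
              (fun p hp => hg p (Finset.mem_cons.mpr (Or.inr hp)))) (by norm_num)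
          exact le_trans (by norm_num) (hg a (Finset.mem_cons_self a D))
      _ ≤ _ := by
          apply Finset.single_le_sum (f := fun x =>
            MvPolynomial.coeff x.1 (L a) * MvPolynomial.coeff x.2 (∏ p ∈ D, L p)) ?_ hmem
          intro x _
          exact mul_nonneg (hnn a (Finset.mem_cons_self a D) x.1)
            (prod_coeff_nonneg D L (fun p hp ν => hnn p (Finset.mem_cons.mpr (Or.inr hp)) ν) x.2)

lemma coeff_prod_linear (D : Finset ι) (L : ι → MvPolynomial V ℚ) (c : ι → ℚ)
    (hL1 : ∀ p ∈ D, ∀ ν, MvPolynomial.coeff ν (L p) ≠ 0 → ∑ v, ν v = 1)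
    (μ : V →₀ ℕ) (hμ : ∑ v, μ v = D.card) :
    MvPolynomial.coeff μ (∏ p ∈ D, (L p + MvPolynomial.C (c p)))
      = MvPolynomial.coeff μ (∏ p ∈ D, L p) := by
  induction D using Finset.cons_induction generalizing μ with
  | empty => simp
  | cons a D ha ih =>
    have hLdeg : ∀ p ∈ D, (L p + MvPolynomial.C (c p)).totalDegree ≤ 1 := by
      intro p hp
      apply le_trans (MvPolynomial.totalDegree_add _ _)
      apply max_le
      · rw [MvPolynomial.totalDegree]
        apply Finset.sup_le
        intro ν hν
        rw [MvPolynomial.mem_support_iff] at hν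
        have := hL1 p (Finset.mem_cons.mpr (Or.inr hp)) ν hν
        have hs : (ν.sum fun _ e => e) = ∑ v, ν v := by
          rw [Finsupp.sum_fintype]; intro; rfl
        omega
      · simp [MvPolynomial.totalDegree_C]
    have hQdeg : (∏ p ∈ D, (L p + MvPolynomial.C (c p))).totalDegree ≤ D.card := by
      refine le_trans (MvPolynomial.totalDegree_finset_prod _ _) ?_
      refine le_trans (Finset.sum_le_sum (g := fun _ => 1) hLdeg) ?_
      simp
    rw [Finset.prod_cons, Finset.prod_cons, add_mul, MvPolynomial.coeff_add,
      MvPolynomial.coeff_C_mul]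
    have hQ0 : MvPolynomial.coeff μ (∏ p ∈ D, (L p + MvPolynomial.C (c p))) = 0 := by
      apply MvPolynomial.coeff_eq_zero_of_totalDegree_lt
      have : ∑ i ∈ μ.support, μ i = ∑ v, μ v := by
        apply Finset.sum_subset (Finset.subset_univ _)
        intro x _ hx
        exact Finsupp.notMem_support_iff.mp hx
      rw [this, hμ, Finset.card_cons]
      omega
    rw [hQ0, mul_zero, add_zero, MvPolynomial.coeff_mul, MvPolynomial.coeff_mul]
    apply Finset.sum_congr rfl
    intro x hx
    rcases eq_or_ne (MvPolynomial.coeff x.1 (L a)) 0 with h0 | h0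
    · rw [h0, zero_mul, zero_mul]
    · have hx1 : ∑ v, x.1 v = 1 := hL1 a (Finset.mem_cons_self a D) x.1 h0
      have hadd : x.1 + x.2 = μ := Finset.HasAntidiagonal.mem_antidiagonal.mp hx
      have hx2 : ∑ v, x.2 v = D.card := by
        have : ∑ v, x.1 v + ∑ v, x.2 v = ∑ v, μ v := by
          rw [← Finset.sum_add_distrib, ← hadd]
          apply Finset.sum_congr rfl
          intro v _
          simp [Finsupp.add_apply]
        rw [hμ, Finset.card_cons] at this
        omega
      rw [ih (fun p hp ν h => hL1 p (Finset.mem_cons.mpr (Or.inr hp)) ν h) x.2 hx2]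

lemma key_lemma {ι : Type*} [DecidableEq ι] (D : Finset ι) (m : ι → V → ℕ) (c : ι → ℚ)
    (hd : ι → V) (hhd : ∀ p ∈ D, 1 ≤ m p (hd p))
    (hcap : ∀ v, (D.filter (fun p => hd p = v)).card ≤ 2) :
    ∃ t : V → ℚ, (∀ v, t v ∈ ({1,2,3} : Finset ℚ)) ∧
      ∀ p ∈ D, (∑ v, (m p v : ℚ) * t v) ≠ c p := by
  classical
  set μ : V →₀ ℕ := ∑ p ∈ D, Finsupp.single (hd p) 1 with hμdef
  have hμapp : ∀ v, μ v = (D.filter (fun p => hd p = v)).card := by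
    intro v
    rw [hμdef, Finsupp.finset_sum_apply]
    rw [Finset.card_filter]
    apply Finset.sum_congr rfl
    intro p _
    rw [Finsupp.single_apply]
  have hμ2 : ∀ v, μ v ≤ 2 := fun v => (hμapp v).le.trans (hcap v)
  have hdegμ : ∑ v, μ v = D.card := by
    rw [Finset.sum_congr rfl fun v _ => hμapp v]
    rw [Finset.sum_congr rfl fun v (_ : v ∈ Finset.univ) => Finset.card_filter _ _]
    rw [Finset.sum_comm]
    rw [Finset.sum_congr rfl fun p _ => Finset.sum_ite_eq Finset.univ (hd p) (fun _ => 1)]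
    simp
  set P : MvPolynomial V ℚ := ∏ p ∈ D, (lin (m p) + MvPolynomial.C (-(c p))) with hPdef
  set pad : V →₀ ℕ := const2 V - μ with hpaddef
  have hpadapp : ∀ v, pad v = 2 - μ v := fun v => Finsupp.tsub_apply _ _ v
  have hpadle : pad ≤ const2 V := by
    rw [Finsupp.le_iff]
    intro v _
    rw [hpadapp]
    simp only [const2_apply]
    omega
  have hsub : const2 V - pad = μ := by
    ext v
    rw [Finsupp.tsub_apply, hpadapp]
    have := hμ2 v
    simp only [const2_apply]
    omega
  set P' : MvPolynomial V ℚ := P * MvPolynomial.monomial pad 1 with hP'def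
  have hcoeffP : MvPolynomial.coeff μ P ≠ 0 := by
    rw [hPdef, coeff_prod_linear D (fun p => lin (m p)) (fun p => -(c p))
      (fun p _ ν h => lin_deg_one (m p) ν h) μ hdegμ]
    have hlow := prod_coeff_lower D (fun p => lin (m p)) hd
      (fun p _ ν => lin_coeff_nonneg (m p) ν)
      (fun p hp => by
        rw [lin_coeff_single]
        exact_mod_cast Nat.one_le_cast.mpr (hhd p hp))
    rw [← hμdef] at hlow
    intro h0
    rw [h0] at hlow
    norm_num at hlow
  have hcoeffP' : MvPolynomial.coeff (const2 V) P' ≠ 0 := by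
    rw [hP'def, MvPolynomial.coeff_mul_monomial' _ pad 1 P, if_pos hpadle, hsub, mul_one]
    exact hcoeffP
  have hdegP : P.totalDegree ≤ D.card := by
    rw [hPdef]
    refine le_trans (MvPolynomial.totalDegree_finset_prod _ _) ?_
    refine le_trans (Finset.sum_le_sum (g := fun _ => 1)
      (fun p _ => ?_)) (by simp)
    refine le_trans (MvPolynomial.totalDegree_add _ _) (max_le (lin_totalDegree (m p)) ?_)
    simp [MvPolynomial.totalDegree_C]
  have hdegP' : P'.totalDegree ≤ 2 * Fintype.card V := by
    rw [hP'def]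
    refine le_trans (MvPolynomial.totalDegree_mul _ _) ?_
    rw [MvPolynomial.totalDegree_monomial _ (one_ne_zero)]
    have hpadsum : (pad.sum fun _ e => e) = ∑ v, pad v := by
      rw [Finsupp.sum_fintype]; intro; rfl
    have : D.card + ∑ v, pad v ≤ 2 * Fintype.card V := by
      rw [← hdegμ, ← Finset.sum_add_distrib]
      calc ∑ v, (μ v + pad v) ≤ ∑ _v : V, 2 := by
            apply Finset.sum_le_sum
            intro v _
            rw [hpadapp]
            have := hμ2 v
            omega
        _ = 2 * Fintype.card V := by simp [Finset.sum_const, mul_comm]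
    rw [hpadsum]
    omega
  obtain ⟨x, hxmem, hxne⟩ := cn_lite P' hdegP' hcoeffP'
  refine ⟨x, hxmem, ?_⟩
  intro p hp
  have hPne : MvPolynomial.eval x P ≠ 0 := by
    intro h0
    apply hxne
    rw [hP'def, map_mul, h0, zero_mul]
  rw [hPdef, map_prod] at hPne
  have hfac := Finset.prod_ne_zero_iff.mp hPne p hp
  have heval : MvPolynomial.eval x (lin (m p) + MvPolynomial.C (-(c p)))
      = (∑ v, (m p v : ℚ) * x v) - c p := by
    rw [map_add, MvPolynomial.eval_C, lin, map_sum]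
    rw [Finset.sum_congr rfl fun v _ => by
      rw [map_mul, MvPolynomial.eval_C, MvPolynomial.eval_X]]
    ring
  rw [heval] at hfac
  exact sub_ne_zero.mp hfac

theorem main_thm
    {V : Type*} [Fintype V] [DecidableEq V] (G : SimpleGraph V) [DecidableRel G.Adj]
    (A B C : Finset V)
    (hcover : A ∪ B ∪ C = Finset.univ)
    (hAB : Disjoint A B) (hAC : Disjoint A C) (hBC : Disjoint B C)
    (hindA : ∀ u ∈ A, ∀ v ∈ A, ¬G.Adj u v)
    (hindB : ∀ u ∈ B, ∀ v ∈ B, ¬G.Adj u v)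
    (hindC : ∀ u ∈ C, ∀ v ∈ C, ¬G.Adj u v)
    (hh : ∃ h : V → ℕ, (∀ x ∈ C, h x ∈ Finset.Icc 1 12) ∧
      ∀ u ∈ A ∪ B, (∃ x ∈ C, G.Adj u x) →
        ¬(12 ∣ ∑ x ∈ (G.neighborFinset u).filter (· ∈ C), h x))
    (hor : ∃ ori : Sym2 V → V, (∀ e ∈ G.edgeSet, ori e ∈ e) ∧
      ∀ v ∈ A ∪ B,
        ((G.neighborFinset v).filter fun u => u ∈ A ∪ B ∧ ori s(u, v) = v).card ≤ 2) :
    ∃ f : V → ℕ, (∀ v, f v ∈ Finset.Icc 1 36) ∧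
      ∀ ⦃u v : V⦄, G.Adj u v →
        (∑ x ∈ G.neighborFinset u, f x) ≠ (∑ x ∈ G.neighborFinset v, f x) := by
  classical
  obtain ⟨h, hh1, hh2⟩ := hh
  obtain ⟨ori, hori1, hori2⟩ := hor
  have htri : ∀ w : V, (w ∈ A ∧ w ∉ B ∧ w ∉ C) ∨ (w ∉ A ∧ w ∈ B ∧ w ∉ C) ∨
      (w ∉ A ∧ w ∉ B ∧ w ∈ C) := by
    intro w
    have hw : w ∈ A ∪ B ∪ C := by rw [hcover]; exact Finset.mem_univ w
    rw [Finset.mem_union, Finset.mem_union] at hw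
    have d1 : w ∈ A → w ∉ B := fun hx => Finset.disjoint_left.mp hAB hx
    have d2 : w ∈ A → w ∉ C := fun hx => Finset.disjoint_left.mp hAC hx
    have d3 : w ∈ B → w ∉ C := fun hx => Finset.disjoint_left.mp hBC hx
    tauto
  set D : Finset (V × V) := (A ×ˢ B).filter (fun p : V × V => G.Adj p.1 p.2) with hD
  set m : V × V → V → ℕ := fun p v =>
    (if G.Adj p.1 v ∧ v ∈ B then 1 else 0) + (if G.Adj p.2 v ∧ v ∈ A then 1 else 0) with hm
  set hdf : V × V → V := fun p => ori s(p.1, p.2) with hhdf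
  set σr : V → ℚ := fun u => ((∑ x ∈ (G.neighborFinset u).filter (· ∈ C), h x : ℕ) : ℚ)
    with hσr
  set dA : V → ℕ := fun b => ((G.neighborFinset b).filter (· ∈ A)).card with hdA
  set c : V × V → ℚ := fun p => (σr p.2 - σr p.1) / 12 + 4 * dA p.2 with hc
  have hDmem : ∀ p ∈ D, p.1 ∈ A ∧ p.2 ∈ B ∧ G.Adj p.1 p.2 := by
    intro p hp
    rw [hD, Finset.mem_filter, Finset.mem_product] at hp
    exact ⟨hp.1.1, hp.1.2, hp.2⟩
  -- head is an endpoint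
  have hdmem : ∀ p ∈ D, hdf p = p.1 ∨ hdf p = p.2 := by
    intro p hp
    obtain ⟨pa, pb, padj⟩ := hDmem p hp
    have : ori s(p.1, p.2) ∈ (s(p.1, p.2) : Sym2 V) :=
      hori1 _ ((SimpleGraph.mem_edgeSet G).mpr padj)
    rw [Sym2.mem_iff] at this
    rw [hhdf]
    exact this
  have hhd : ∀ p ∈ D, 1 ≤ m p (hdf p) := by
    intro p hp
    obtain ⟨pa, pb, padj⟩ := hDmem p hp
    rcases hdmem p hp with he | he <;> rw [he] <;> simp only [hm]
    · have h2 : (if G.Adj p.2 p.1 ∧ p.1 ∈ A then (1:ℕ) else 0) = 1 :=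
        if_pos ⟨padj.symm, pa⟩
      omega
    · have h2 : (if G.Adj p.1 p.2 ∧ p.2 ∈ B then (1:ℕ) else 0) = 1 :=
        if_pos ⟨padj, pb⟩
      omega
  have hcap : ∀ v, (D.filter (fun p => hdf p = v)).card ≤ 2 := by
    intro v
    by_cases hvA : v ∈ A
    · refine le_trans (Finset.card_le_card_of_injOn Prod.snd ?_ ?_)
        (hori2 v (Finset.mem_union_left B hvA))
      · intro p hp
        rw [Finset.mem_coe, Finset.mem_filter] at hp
        obtain ⟨pa, pb, padj⟩ := hDmem p hp.1
        have hv1 : p.1 = v := by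
          rcases hdmem p hp.1 with he | he
          · rw [← hp.2, he]
          · exfalso
            apply Finset.disjoint_left.mp hAB hvA
            rw [← hp.2, he]; exact pb
        rw [Finset.mem_coe, Finset.mem_filter, SimpleGraph.mem_neighborFinset]
        subst hv1
        refine ⟨padj, Finset.mem_union_right A pb, ?_⟩
        rw [Sym2.eq_swap]
        exact hp.2
      · intro p hp q hq heq
        rw [Finset.coe_filter, Set.mem_setOf_eq] at hp hq
        obtain ⟨pa, pb, padj⟩ := hDmem p hp.1
        obtain ⟨qa, qb, qadj⟩ := hDmem q hq.1
        have hv1 : p.1 = v := by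
          rcases hdmem p hp.1 with he | he
          · rw [← hp.2, he]
          · exact absurd (hp.2 ▸ he ▸ pb) (Finset.disjoint_left.mp hAB hvA)
        have hv2 : q.1 = v := by
          rcases hdmem q hq.1 with he | he
          · rw [← hq.2, he]
          · exact absurd (hq.2 ▸ he ▸ qb) (Finset.disjoint_left.mp hAB hvA)
        exact Prod.ext (hv1.trans hv2.symm) heq
    · by_cases hvB : v ∈ B
      · refine le_trans (Finset.card_le_card_of_injOn Prod.fst ?_ ?_)
          (hori2 v (Finset.mem_union_right A hvB))
        · intro p hp
          rw [Finset.mem_coe, Finset.mem_filter] at hp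
          obtain ⟨pa, pb, padj⟩ := hDmem p hp.1
          have hv2 : p.2 = v := by
            rcases hdmem p hp.1 with he | he
            · exact absurd (hp.2 ▸ he ▸ pa) hvA
            · rw [← hp.2, he]
          rw [Finset.mem_coe, Finset.mem_filter, SimpleGraph.mem_neighborFinset]
          subst hv2
          exact ⟨padj.symm, Finset.mem_union_left B pa, hp.2⟩
        · intro p hp q hq heq
          rw [Finset.coe_filter, Set.mem_setOf_eq] at hp hq
          obtain ⟨pa, pb, padj⟩ := hDmem p hp.1
          obtain ⟨qa, qb, qadj⟩ := hDmem q hq.1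
          have hv1 : p.2 = v := by
            rcases hdmem p hp.1 with he | he
            · exact absurd (hp.2 ▸ he ▸ pa) hvA
            · rw [← hp.2, he]
          have hv2 : q.2 = v := by
            rcases hdmem q hq.1 with he | he
            · exact absurd (hq.2 ▸ he ▸ qa) hvA
            · rw [← hq.2, he]
          exact Prod.ext heq (hv1.trans hv2.symm)
      · have : D.filter (fun p => hdf p = v) = ∅ := by
          rw [Finset.filter_eq_empty_iff]
          intro p hp he
          obtain ⟨pa, pb, padj⟩ := hDmem p hp
          rcases hdmem p hp with h1 | h1
          · exact hvA (he ▸ h1 ▸ pa)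
          · exact hvB (he ▸ h1 ▸ pb)
        rw [this]
        simp
  obtain ⟨t, htmem, htkey⟩ := key_lemma D m c hdf hhd hcap
  have htval : ∀ v, t v = 1 ∨ t v = 2 ∨ t v = 3 := by
    intro v
    have := htmem v
    simpa [Finset.mem_insert] using this
  set nt : V → ℕ := fun v => if t v = 1 then 1 else if t v = 2 then 2 else 3 with hnt
  have hntc : ∀ v, (nt v : ℚ) = t v := by
    intro v
    rcases htval v with h1 | h1 | h1 <;> simp [hnt, h1] <;> norm_num [h1]
  have hnt1 : ∀ v, 1 ≤ nt v := by
    intro v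
    simp only [hnt]
    split_ifs <;> norm_num
  have hnt3 : ∀ v, nt v ≤ 3 := by
    intro v
    simp only [hnt]
    split_ifs <;> norm_num
  set f : V → ℕ := fun v => if v ∈ A then 12 * (4 - nt v) else if v ∈ B then 12 * nt v
    else h v with hf
  have hfA : ∀ v ∈ A, f v = 12 * (4 - nt v) := by
    intro v hv
    rw [hf]; simp [hv]
  have hfB : ∀ v ∈ B, f v = 12 * nt v := by
    intro v hv
    have hvA : v ∉ A := fun hvA => Finset.disjoint_left.mp hAB hvA hv
    rw [hf]; simp [hv, hvA]
  have hfC : ∀ v ∈ C, f v = h v := by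
    intro v hv
    have hvA : v ∉ A := fun hvA => Finset.disjoint_left.mp hAC hvA hv
    have hvB : v ∉ B := fun hvB => Finset.disjoint_left.mp hBC hvB hv
    rw [hf]; simp [hvA, hvB]
  have hfAcast : ∀ v ∈ A, (f v : ℚ) = 48 - 12 * t v := by
    intro v hv
    rw [hfA v hv]
    have h3 := hnt3 v
    push_cast [Nat.cast_sub (by omega : nt v ≤ 4)]
    rw [hntc v]
    ring
  have hfBcast : ∀ v ∈ B, (f v : ℚ) = 12 * t v := by
    intro v hv
    rw [hfB v hv]
    push_cast
    rw [hntc v]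
  have hsplit : ∀ u : V, (∑ w ∈ G.neighborFinset u, f w) =
      (∑ w ∈ (G.neighborFinset u).filter (· ∈ A), f w) +
      (∑ w ∈ (G.neighborFinset u).filter (· ∈ B), f w) +
      (∑ w ∈ (G.neighborFinset u).filter (· ∈ C), f w) := by
    intro u
    rw [Finset.sum_filter, Finset.sum_filter, Finset.sum_filter,
      ← Finset.sum_add_distrib, ← Finset.sum_add_distrib]
    apply Finset.sum_congr rfl
    intro w _
    rcases htri w with ⟨h1, h2, h3⟩ | ⟨h1, h2, h3⟩ | ⟨h1, h2, h3⟩ <;> simp [h1, h2, h3]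
  have hNA : ∀ u ∈ A, (G.neighborFinset u).filter (· ∈ A) = ∅ := by
    intro u hu
    rw [Finset.filter_eq_empty_iff]
    intro w hw hwA
    rw [SimpleGraph.mem_neighborFinset] at hw
    exact hindA u hu w hwA hw
  have hNB : ∀ u ∈ B, (G.neighborFinset u).filter (· ∈ B) = ∅ := by
    intro u hu
    rw [Finset.filter_eq_empty_iff]
    intro w hw hwB
    rw [SimpleGraph.mem_neighborFinset] at hw
    exact hindB u hu w hwB hw
  have hNC : ∀ u ∈ C, (G.neighborFinset u).filter (· ∈ C) = ∅ := by
    intro u hu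
    rw [Finset.filter_eq_empty_iff]
    intro w hw hwC
    rw [SimpleGraph.mem_neighborFinset] at hw
    exact hindC u hu w hwC hw
  -- claim 1 : edges between A ∪ B and C
  have claim1 : ∀ u, u ∈ A ∪ B → ∀ x ∈ C, G.Adj u x →
      (∑ w ∈ G.neighborFinset u, f w) ≠ (∑ w ∈ G.neighborFinset x, f w) := by
    intro u hu x hx hadj heq
    have hdvdA : ∀ z, 12 ∣ ∑ w ∈ (G.neighborFinset z).filter (· ∈ A), f w := by
      intro z
      apply Finset.dvd_sum
      intro w hw
      rw [hfA w (Finset.mem_filter.mp hw).2]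
      exact Dvd.intro _ rfl
    have hdvdB : ∀ z, 12 ∣ ∑ w ∈ (G.neighborFinset z).filter (· ∈ B), f w := by
      intro z
      apply Finset.dvd_sum
      intro w hw
      rw [hfB w (Finset.mem_filter.mp hw).2]
      exact Dvd.intro _ rfl
    have hdvdx : 12 ∣ ∑ w ∈ G.neighborFinset x, f w := by
      rw [hsplit x, hNC x hx, Finset.sum_empty, add_zero]
      exact dvd_add (hdvdA x) (hdvdB x)
    have hCu : (∑ w ∈ (G.neighborFinset u).filter (· ∈ C), f w) =
        ∑ w ∈ (G.neighborFinset u).filter (· ∈ C), h w :=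
      Finset.sum_congr rfl (fun w hw => hfC w (Finset.mem_filter.mp hw).2)
    have hndu : ¬ (12 ∣ ∑ w ∈ G.neighborFinset u, f w) := by
      rw [hsplit u]
      intro hdvd
      apply hh2 u hu ⟨x, hx, hadj⟩
      have h1 := hdvdA u
      have h2 := hdvdB u
      rw [← hCu]
      omega
    rw [heq] at hndu
    exact hndu hdvdx
  -- claim 2 : edges between A and B
  have claim2 : ∀ a ∈ A, ∀ b ∈ B, G.Adj a b →
      (∑ w ∈ G.neighborFinset a, f w) ≠ (∑ w ∈ G.neighborFinset b, f w) := by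
    intro a ha b hb hadj heq
    have hpD : (a, b) ∈ D := by
      rw [hD, Finset.mem_filter, Finset.mem_product]
      exact ⟨⟨ha, hb⟩, hadj⟩
    apply htkey (a, b) hpD
    have hfiltB : (G.neighborFinset a).filter (· ∈ B) =
        Finset.univ.filter (fun v => G.Adj a v ∧ v ∈ B) := by
      ext w
      simp [SimpleGraph.mem_neighborFinset]
    have hfiltA : (G.neighborFinset b).filter (· ∈ A) =
        Finset.univ.filter (fun v => G.Adj b v ∧ v ∈ A) := by
      ext w
      simp [SimpleGraph.mem_neighborFinset]
    have hmsum : (∑ v, ((m (a, b) v : ℕ) : ℚ) * t v) =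
        (∑ w ∈ (G.neighborFinset a).filter (· ∈ B), t w) +
        (∑ w ∈ (G.neighborFinset b).filter (· ∈ A), t w) := by
      rw [hfiltB, hfiltA, Finset.sum_filter, Finset.sum_filter]
      rw [← Finset.sum_add_distrib]
      apply Finset.sum_congr rfl
      intro v _
      simp only [hm]
      push_cast
      rw [add_mul]
      congr 1 <;> split_ifs <;> simp
    have hSa : ((∑ w ∈ G.neighborFinset a, f w : ℕ) : ℚ) =
        12 * (∑ w ∈ (G.neighborFinset a).filter (· ∈ B), t w) + σr a := by
      rw [hsplit a, hNA a ha, Finset.sum_empty]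
      push_cast
      rw [zero_add]
      congr 1
      · rw [Finset.mul_sum]
        apply Finset.sum_congr rfl
        intro w hw
        exact hfBcast w (Finset.mem_filter.mp hw).2
      · rw [hσr]
        push_cast
        apply Finset.sum_congr rfl
        intro w hw
        rw [hfC w (Finset.mem_filter.mp hw).2]
    have hSb : ((∑ w ∈ G.neighborFinset b, f w : ℕ) : ℚ) =
        48 * dA b - 12 * (∑ w ∈ (G.neighborFinset b).filter (· ∈ A), t w) + σr b := by
      rw [hsplit b, hNB b hb, Finset.sum_empty, add_zero]
      push_cast
      have hApart : (∑ w ∈ (G.neighborFinset b).filter (· ∈ A), (f w : ℚ)) =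
          48 * dA b - 12 * (∑ w ∈ (G.neighborFinset b).filter (· ∈ A), t w) := by
        rw [Finset.sum_congr rfl (fun w hw => hfAcast w (Finset.mem_filter.mp hw).2)]
        rw [Finset.sum_sub_distrib, Finset.sum_const, Finset.mul_sum, hdA]
        simp only
        push_cast
        ring
      rw [hApart, hσr]
      push_cast
      congr 1
      apply Finset.sum_congr rfl
      intro w hw
      rw [hfC w (Finset.mem_filter.mp hw).2]
    have hcast := congrArg (fun n : ℕ => (n : ℚ)) heq
    rw [hSa, hSb] at hcast
    rw [hmsum, hc]
    simp only
    field_simp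
    linarith
  refine ⟨f, ?_, ?_⟩
  · intro v
    rw [Finset.mem_Icc]
    rcases htri v with ⟨h1, h2, h3⟩ | ⟨h1, h2, h3⟩ | ⟨h1, h2, h3⟩
    · rw [hfA v h1]
      have := hnt1 v; have := hnt3 v
      omega
    · rw [hfB v h2]
      have := hnt1 v; have := hnt3 v
      omega
    · rw [hfC v h3]
      have := hh1 v h3
      rw [Finset.mem_Icc] at this
      omega
  · intro u v hadj
    rcases htri u with ⟨h1, h2, h3⟩ | ⟨h1, h2, h3⟩ | ⟨h1, h2, h3⟩ <;>
      rcases htri v with ⟨g1, g2, g3⟩ | ⟨g1, g2, g3⟩ | ⟨g1, g2, g3⟩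
    · exact absurd hadj (hindA u h1 v g1)
    · exact claim2 u h1 v g2 hadj
    · exact claim1 u (Finset.mem_union_left B h1) v g3 hadj
    · exact fun e => claim2 v g1 u h2 hadj.symm e.symm
    · exact absurd hadj (hindB u h2 v g2)
    · exact claim1 u (Finset.mem_union_right A h2) v g3 hadj
    · exact fun e => claim1 v (Finset.mem_union_left B g1) u h3 hadj.symm e.symm
    · exact fun e => claim1 v (Finset.mem_union_right A g2) u h3 hadj.symm e.symm
    · exact absurd hadj (hindC u h3 v g3)

end AuxCN

/-- Let the vertex set of a finite simple graph `G` be partitioned into three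
independent sets `A`, `B`, `C`. Suppose (i) there is `h : C → {1, …, 12}` such that
every vertex of `A ∪ B` with a neighbor in `C` has neighborhood sum over `C` not
divisible by `12`, and (ii) the bipartite subgraph of `G` induced on `A ∪ B` has an
orientation with all indegrees at most `2`. Then `η(G) ≤ 36`. -/
theorem additive_coloring_three_parts
    {V : Type*} [Fintype V] [DecidableEq V] (G : SimpleGraph V) [DecidableRel G.Adj]
    (A B C : Finset V)
    (hcover : A ∪ B ∪ C = Finset.univ)
    (hAB : Disjoint A B) (hAC : Disjoint A C) (hBC : Disjoint B C)
    (hindA : ∀ u ∈ A, ∀ v ∈ A, ¬G.Adj u v)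
    (hindB : ∀ u ∈ B, ∀ v ∈ B, ¬G.Adj u v)
    (hindC : ∀ u ∈ C, ∀ v ∈ C, ¬G.Adj u v)
    (hh : ∃ h : V → ℕ, (∀ x ∈ C, h x ∈ Finset.Icc 1 12) ∧
      ∀ u ∈ A ∪ B, (∃ x ∈ C, G.Adj u x) →
        ¬(12 ∣ ∑ x ∈ (G.neighborFinset u).filter (· ∈ C), h x))
    (hor : ∃ ori : Sym2 V → V, (∀ e ∈ G.edgeSet, ori e ∈ e) ∧
      ∀ v ∈ A ∪ B,
        ((G.neighborFinset v).filter fun u => u ∈ A ∪ B ∧ ori s(u, v) = v).card ≤ 2) :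
    eta G ≤ 36 := by
  obtain ⟨f, hrange, hne⟩ := main_thm G A B C hcover hAB hAC hBC hindA hindB hindC hh hor
  have hns : ∀ u : V, nsum G f u = ∑ x ∈ G.neighborFinset u, f x := by
    intro u
    simp only [nsum]
    apply Finset.sum_congr _ (fun _ _ => rfl)
    ext w
    simp [SimpleGraph.mem_neighborFinset]
  have hcol : HasAddColoring G 36 :=
    ⟨f, hrange, fun u v hadj => by rw [hns u, hns v]; exact hne hadj⟩
  exact Nat.sInf_le hcol
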